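/- Let G be a finite connected weighted graph with unit edge lengths, T a nonempty terminal set, and v the lex-minimizer of a partial assignment v₀ on T. Then for every non-terminal vertex x, v(x) = (max_{y ~ x} v(y) + min_{y ~ x} v(y)) / 2. -/

import Mathlib

/-- Total length of a walk in a graph with edge lengths `ℓ`. -/
noncomputable def walkLen {V : Type*} (ℓ : Sym2 V → ℝ) {G : SimpleGraph V} {u v : V}
    (p : G.Walk u v) : ℝ :=
  (p.darts.map fun d => ℓ d.edge).sum

/-- Shortest-path distance induced by edge lengths `ℓ`. -/
noncomputable def gdist {V : Type*} (G : SimpleGraph V) (ℓ : Sym2 V → ℝ) (u v : V) : ℝ :=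
  sInf {x | ∃ p : G.Walk u v, walkLen ℓ p = x}

/-- Absolute gradient `|v x - v y| / ℓ(x,y)` of `v` on the unordered pair `e`. -/
noncomputable def absGrad {V : Type*} (ℓ : Sym2 V → ℝ) (v : V → ℝ) (e : Sym2 V) : ℝ :=
  Sym2.lift ⟨fun x y => |v x - v y|, fun x y => abs_sub_comm (v x) (v y)⟩ e / ℓ e

/-- The absolute edge gradients of `v`, sorted in decreasing order. -/
noncomputable def gradList {V : Type*} [Fintype V] [DecidableEq V] (G : SimpleGraph V)
    [DecidableRel G.Adj] (ℓ : Sym2 V → ℝ) (v : V → ℝ) : List ℝ :=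
  (G.edgeFinset.val.map (absGrad ℓ v)).sort (· ≥ ·)

open Classical in
lemma lex_of_counts (t : ℝ) : ∀ (l₂ l₁ : List ℝ), l₁.Pairwise (· ≥ ·) → l₂.Pairwise (· ≥ ·) →
    (l₁.countP (fun x => decide (t ≤ x)) < l₂.countP (fun x => decide (t ≤ x))) →
    (∀ s, t < s → l₁.countP (fun x => decide (s ≤ x)) = l₂.countP (fun x => decide (s ≤ x))) →
    List.Lex (· < ·) l₁ l₂ := by
  intro l₂
  induction l₂ with
  | nil => intro l₁ _ _ hlt _; simp at hlt
  | cons a l₂' ih =>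
    intro l₁ h₁ h₂ hlt heq
    cases l₁ with
    | nil => exact List.Lex.nil
    | cons b l₁' =>
      rcases lt_trichotomy b a with hba | hba | hba
      · exact List.Lex.rel hba
      · subst hba
        refine List.Lex.cons ?_
        apply ih l₁' (List.pairwise_cons.mp h₁).2 (List.pairwise_cons.mp h₂).2
        · simp only [List.countP_cons] at hlt
          omega
        · intro s hs
          have := heq s hs
          simp only [List.countP_cons] at this
          omega
      · exfalso
        have hall : ∀ c ∈ a :: l₂', c < b := by
          intro c hc
          rcases List.mem_cons.mp hc with rfl | hc
          · exact hba
          · exact lt_of_le_of_lt ((List.pairwise_cons.mp h₂).1 c hc) hba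
        by_cases htb : t < b
        · have h := heq b htb
          have h1 : 0 < (b :: l₁').countP (fun x => decide (b ≤ x)) := by
            apply List.countP_pos_iff.mpr
            exact ⟨b, List.mem_cons_self, by simp⟩
          have h2 : (a :: l₂').countP (fun x => decide (b ≤ x)) = 0 := by
            apply List.countP_eq_zero.mpr
            intro c hc
            simpa using not_le.mpr (hall c hc)
          omega
        · push_neg at htb
          have h2 : (a :: l₂').countP (fun x => decide (t ≤ x)) = 0 := by
            apply List.countP_eq_zero.mpr
            intro c hc
            simpa using not_le.mpr (lt_of_lt_of_le (hall c hc) htb)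
          omega

open Classical in
lemma countP_sort (p : ℝ → Prop) [DecidablePred p] (s : Multiset ℝ) :
    (s.sort (· ≥ ·)).countP (fun x => decide (p x)) = s.countP p := by
  conv_rhs => rw [← Multiset.sort_eq (α := ℝ) (r := (· ≥ ·)) (s := s)]
  rfl

lemma absGrad_unit {V : Type*} (v : V → ℝ) (a b : V) :
    absGrad (fun _ => (1 : ℝ)) v s(a, b) = |v a - v b| := by
  simp [absGrad, Sym2.lift_mk]

/-- On a unit-length graph, the lex-minimizer satisfies
`v x = (max of neighbors + min of neighbors) / 2` at every non-terminal `x`. -/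
theorem lex_min_maxmin_average_unit_lengths {V : Type*} [Fintype V] [DecidableEq V]
    (G : SimpleGraph V) [DecidableRel G.Adj] (hG : G.Connected)
    (T : Set V) (hT : T.Nonempty) (v₀ : V → ℝ)
    (v : V → ℝ) (hext : ∀ t ∈ T, v t = v₀ t)
    (hlex : ∀ w : V → ℝ, (∀ t ∈ T, w t = v₀ t) → w ≠ v →
      List.Lex (· < ·) (gradList G (fun _ => (1 : ℝ)) v)
        (gradList G (fun _ => (1 : ℝ)) w)) :
    ∀ x : V, x ∉ T →
      v x = (sSup {r : ℝ | ∃ y ∈ G.neighborSet x, r = v y} +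
          sInf {r : ℝ | ∃ y ∈ G.neighborSet x, r = v y}) / 2 := by
  classical
  intro x hx
  set S := {r : ℝ | ∃ y ∈ G.neighborSet x, r = v y} with hS
  -- x has a neighbor
  obtain ⟨t₀, ht₀⟩ := hT
  have hxt : x ≠ t₀ := fun h => hx (h ▸ ht₀)
  obtain ⟨p⟩ := hG.preconnected x t₀
  have hadj0 : ∃ y, G.Adj x y := by
    cases p with
    | nil => exact absurd rfl hxt
    | cons h q => exact ⟨_, h⟩
  obtain ⟨y₁, hy₁⟩ := hadj0
  have hSne : S.Nonempty := ⟨v y₁, y₁, hy₁, rfl⟩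
  have hSfin : S.Finite := by
    have : S = v '' (G.neighborSet x) := by
      ext r
      simp only [hS, Set.mem_setOf_eq, Set.mem_image]
      constructor
      · rintro ⟨y, hy, rfl⟩; exact ⟨y, hy, rfl⟩
      · rintro ⟨y, hy, rfl⟩; exact ⟨y, hy, rfl⟩
    rw [this]
    exact (Set.toFinite _).image _
  set M := sSup S with hM
  set m := sInf S with hm
  have hub : ∀ y, G.Adj x y → v y ≤ M :=
    fun y hy => le_csSup hSfin.bddAbove ⟨y, hy, rfl⟩
  have hlb : ∀ y, G.Adj x y → m ≤ v y :=
    fun y hy => csInf_le hSfin.bddBelow ⟨y, hy, rfl⟩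
  have hmM : m ≤ M := le_trans (hlb y₁ hy₁) (hub y₁ hy₁)
  by_contra hne
  set c := (M + m) / 2 with hc
  have hne' : v x ≠ c := hne
  -- the maximal incident gradient
  set g := max (v x - m) (M - v x) with hg
  have hg_big : (M - m) / 2 < g := by
    by_contra hcon
    push_neg at hcon
    have h1 : v x - m ≤ (M - m) / 2 := le_trans (le_max_left _ _) hcon
    have h2 : M - v x ≤ (M - m) / 2 := le_trans (le_max_right _ _) hcon
    exact hne' (by rw [hc]; linarith)
  have hg_inc : ∀ y, G.Adj x y → |v x - v y| ≤ g := by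
    intro y hy
    rw [abs_sub_le_iff]
    exact ⟨le_trans (by linarith [hlb y hy]) (le_max_left _ _),
      le_trans (by linarith [hub y hy]) (le_max_right _ _)⟩
  have hg_ex : ∃ y, G.Adj x y ∧ |v x - v y| = g := by
    rcases le_total (v x - m) (M - v x) with hh | hh
    · obtain ⟨yM, hyM, hvyM⟩ := hSne.csSup_mem hSfin
      rw [← hM] at hvyM
      refine ⟨yM, hyM, ?_⟩
      have hgMx : g = M - v x := max_eq_right hh
      have h0 : (0:ℝ) ≤ M - v x := by
        have h' := hg_big; rw [hgMx] at h'; linarith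
      rw [← hvyM, hgMx, abs_sub_comm, abs_of_nonneg h0]
    · obtain ⟨ym, hym, hvym⟩ := hSne.csInf_mem hSfin
      rw [← hm] at hvym
      refine ⟨ym, hym, ?_⟩
      have hgmx : g = v x - m := max_eq_left hh
      have h0 : (0:ℝ) ≤ v x - m := by
        have h' := hg_big; rw [hgmx] at h'; linarith
      rw [← hvym, hgmx, abs_of_nonneg h0]
  -- now the perturbation
  set w := Function.update v x c with hwdef
  have hwx : w x = c := Function.update_self x c v
  have hwy : ∀ y, y ≠ x → w y = v y := fun y hy => Function.update_of_ne hy c v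
  have hwT : ∀ t ∈ T, w t = v₀ t := by
    intro t ht
    rw [hwy t (fun h => hx (h ▸ ht))]
    exact hext t ht
  have hwv : w ≠ v := by
    intro h
    exact hne' ((congrFun h x).symm.trans hwx)
  have hlex1 := hlex w hwT hwv
  -- facts about gradients on edges
  have hinc : ∀ e ∈ G.edgeFinset, x ∈ e → ∃ y, G.Adj x y ∧ e = s(x, y) := by
    intro e he hxe
    obtain ⟨y, rfl⟩ := Sym2.mem_iff_exists.mp hxe
    exact ⟨y, (G.mem_edgeSet).mp (SimpleGraph.mem_edgeFinset.mp he), rfl⟩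
  have hincv : ∀ e ∈ G.edgeFinset, x ∈ e → absGrad (fun _ => 1) v e ≤ g := by
    intro e he hxe
    obtain ⟨y, hy, rfl⟩ := hinc e he hxe
    rw [absGrad_unit]
    exact hg_inc y hy
  have hincw : ∀ e ∈ G.edgeFinset, x ∈ e → absGrad (fun _ => 1) w e ≤ (M - m) / 2 := by
    intro e he hxe
    obtain ⟨y, hy, rfl⟩ := hinc e he hxe
    rw [absGrad_unit, hwx, hwy y (G.ne_of_adj hy).symm, abs_sub_le_iff]
    constructor
    · linarith [hlb y hy]
    · linarith [hub y hy]
  have hnoninc : ∀ e : Sym2 V, x ∉ e → absGrad (fun _ => 1) w e = absGrad (fun _ => 1) v e := by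
    intro e hxe
    induction e using Sym2.ind with
    | _ a b =>
      have ha : a ≠ x := by rintro rfl; exact hxe (Sym2.mem_mk_left _ _)
      have hb : b ≠ x := by rintro rfl; exact hxe (Sym2.mem_mk_right _ _)
      rw [absGrad_unit, absGrad_unit, hwy a ha, hwy b hb]
  set E := G.edgeFinset.val with hE
  -- count splitting
  have hsplit : ∀ (u : V → ℝ) (s : ℝ),
      Multiset.countP (fun e => s ≤ absGrad (fun _ => 1) u e) E =
        Multiset.countP (fun e => s ≤ absGrad (fun _ => 1) u e) (E.filter (fun e => x ∈ e)) +
        Multiset.countP (fun e => s ≤ absGrad (fun _ => 1) u e) (E.filter (fun e => ¬ x ∈ e)) := by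
    intro u s
    conv_lhs => rw [← Multiset.filter_add_not (fun e => x ∈ e) E]
    rw [Multiset.countP_add]
  have hcommon : ∀ s : ℝ,
      Multiset.countP (fun e => s ≤ absGrad (fun _ => 1) w e) (E.filter (fun e => ¬ x ∈ e)) =
      Multiset.countP (fun e => s ≤ absGrad (fun _ => 1) v e) (E.filter (fun e => ¬ x ∈ e)) := by
    intro s
    refine Multiset.countP_congr rfl ?_
    intro e he
    rw [hnoninc e ((Multiset.mem_filter.mp he).2)]
  have hwzero : ∀ s : ℝ, g ≤ s →
      Multiset.countP (fun e => s ≤ absGrad (fun _ => 1) w e) (E.filter (fun e => x ∈ e)) = 0 := by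
    intro s hs
    refine Multiset.countP_eq_zero.mpr ?_
    intro e he
    have h1 := hincw e (Multiset.mem_of_mem_filter he) ((Multiset.mem_filter.mp he).2)
    push_neg
    linarith
  -- the key count facts
  have heqs : ∀ s : ℝ, g < s →
      Multiset.countP (fun e => s ≤ absGrad (fun _ => 1) w e) E =
      Multiset.countP (fun e => s ≤ absGrad (fun _ => 1) v e) E := by
    intro s hs
    rw [hsplit, hsplit, hcommon, hwzero s (le_of_lt hs)]
    have hvzero : Multiset.countP (fun e => s ≤ absGrad (fun _ => 1) v e)
        (E.filter (fun e => x ∈ e)) = 0 := by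
      refine Multiset.countP_eq_zero.mpr ?_
      intro e he
      have h1 := hincv e (Multiset.mem_of_mem_filter he) ((Multiset.mem_filter.mp he).2)
      push_neg
      linarith
    rw [hvzero]
  have hlts : Multiset.countP (fun e => g ≤ absGrad (fun _ => 1) w e) E <
      Multiset.countP (fun e => g ≤ absGrad (fun _ => 1) v e) E := by
    rw [hsplit, hsplit, hcommon, hwzero g le_rfl]
    have hvpos : 0 < Multiset.countP (fun e => g ≤ absGrad (fun _ => 1) v e)
        (E.filter (fun e => x ∈ e)) := by
      obtain ⟨y₀, hy₀, hgy₀⟩ := hg_ex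
      refine Multiset.countP_pos.mpr ⟨s(x, y₀), ?_, ?_⟩
      · refine Multiset.mem_filter.mpr ⟨?_, Sym2.mem_mk_left _ _⟩
        exact SimpleGraph.mem_edgeFinset.mpr ((G.mem_edgeSet).mpr hy₀)
      · rw [absGrad_unit]
        exact le_of_eq hgy₀.symm
    omega
  -- translate to gradList counts
  have htrans : ∀ (u : V → ℝ) (s : ℝ),
      (gradList G (fun _ => 1) u).countP (fun r => decide (s ≤ r)) =
      Multiset.countP (fun e => s ≤ absGrad (fun _ => 1) u e) E := by
    intro u s
    rw [gradList, countP_sort (fun r => s ≤ r), Multiset.countP_map,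
      ← Multiset.countP_eq_card_filter]
  have hlex2 : List.Lex (· < ·) (gradList G (fun _ => (1:ℝ)) w)
      (gradList G (fun _ => (1:ℝ)) v) := by
    apply lex_of_counts g
    · exact Multiset.pairwise_sort ..
    · exact Multiset.pairwise_sort ..
    · rw [htrans, htrans]
      exact hlts
    · intro s hs
      rw [htrans, htrans]
      exact heqs s hs
  exact absurd hlex1 (asymm hlex2)
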